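/- Let (A, μ, α) be a Hom-algebra over a field k of characteristic 0. Then A is Hom-power associative if and only if for all λ ∈ k the Hom-algebra A(λ) = (A, μ_λ, α), where μ_λ(x,y) = λ·xy + (1−λ)·yx, is Hom-power associative. -/

import Mathlib

variable {k A : Type*} [Field k] [CharZero k] [AddCommGroup A] [Module k A]

/-- The `n`-th Hom-power: `x^1 = x`, `x^n = x^{n-1} · α^{n-2}(x)`. -/
def homPow (μ : A →ₗ[k] A →ₗ[k] A) (α : A →ₗ[k] A) (x : A) : ℕ → A
  | 0 => x
  | 1 => x
  | n + 2 => μ (homPow μ α x (n + 1)) ((α ^ n) x)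

/-- `A` is `n`-th Hom-power associative. -/
def IsNthHomPowerAssoc (μ : A →ₗ[k] A →ₗ[k] A) (α : A →ₗ[k] A) (n : ℕ) : Prop :=
  ∀ (x : A) (i : ℕ), 1 ≤ i → i ≤ n - 1 →
    homPow μ α x n =
      μ ((α ^ (n - i - 1)) (homPow μ α x i)) ((α ^ (i - 1)) (homPow μ α x (n - i)))

/-- `A` is Hom-power associative. -/
def IsHomPowerAssoc (μ : A →ₗ[k] A →ₗ[k] A) (α : A →ₗ[k] A) : Prop :=
  ∀ n : ℕ, 2 ≤ n → IsNthHomPowerAssoc μ α n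

/-- `A` is up to `n`-th Hom-power associative. -/
def IsUpToNthHomPowerAssoc (μ : A →ₗ[k] A →ₗ[k] A) (α : A →ₗ[k] A) (n : ℕ) : Prop :=
  ∀ m : ℕ, 2 ≤ m → m ≤ n → IsNthHomPowerAssoc μ α m

/-- The Hom-algebra `(A, μ, α)` is multiplicative. -/
def IsMultiplicative (μ : A →ₗ[k] A →ₗ[k] A) (α : A →ₗ[k] A) : Prop :=
  ∀ x y : A, α (μ x y) = μ (α x) (α y)

lemma mu_lam_apply (μ : A →ₗ[k] A →ₗ[k] A) (lam : k) (a b : A) :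
    (lam • μ + (1 - lam) • μ.flip) a b = lam • μ a b + (1 - lam) • μ b a := by
  simp [LinearMap.flip_apply]

/-- In a Hom-power associative algebra, the λ-mutation has the same Hom-powers. -/
lemma homPow_mutation (μ : A →ₗ[k] A →ₗ[k] A) (α : A →ₗ[k] A)
    (h : IsHomPowerAssoc μ α) (lam : k) (x : A) :
    ∀ n, homPow (lam • μ + (1 - lam) • μ.flip) α x n = homPow μ α x n := by
  intro n
  induction n using Nat.strong_induction_on with
  | _ n ih =>
    match n with
    | 0 => rfl
    | 1 => rfl
    | n + 2 =>
      have h1 := h (n + 2) (by omega) x 1 le_rfl (by omega)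
      simp only [show n + 2 - 1 - 1 = n from rfl, show n + 2 - 1 = n + 1 from rfl,
        Nat.add_sub_cancel, Nat.sub_self, pow_zero, Module.End.one_apply, homPow] at h1
      show (lam • μ + (1 - lam) • μ.flip)
          (homPow (lam • μ + (1 - lam) • μ.flip) α x (n + 1)) ((α ^ n) x) = homPow μ α x (n + 2)
      rw [ih (n + 1) (by omega), mu_lam_apply]
      have h2 : homPow μ α x (n + 2) = μ (homPow μ α x (n + 1)) ((α ^ n) x) := rfl
      rw [← h1, ← h2, ← add_smul]
      simp

theorem stmt4 (μ : A →ₗ[k] A →ₗ[k] A) (α : A →ₗ[k] A) :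
    IsHomPowerAssoc μ α ↔
      ∀ lam : k, IsHomPowerAssoc (lam • μ + (1 - lam) • μ.flip) α := by
  constructor
  · intro h lam n hn x i hi1 hi2
    rw [homPow_mutation μ α h lam x n, homPow_mutation μ α h lam x i,
      homPow_mutation μ α h lam x (n - i), mu_lam_apply]
    have hA := h n hn x i hi1 hi2
    have hB := h n hn x (n - i) (by omega) (by omega)
    have e1 : n - (n - i) = i := by omega
    rw [e1] at hB
    rw [← hA, ← hB, ← add_smul]
    simp
  · intro h
    have := h 1
    simpa using this
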